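/- Fix an integer n ≥ 2. The set of square-free positive integers m such that m^p ≢ m (mod p²) for every prime p dividing n has natural density (1/ζ(2)) · ∏_{p | n} p/(p+1), where the product is over primes p dividing n. -/

import Mathlib

open Filter

open Finset ArithmeticFunction

open scoped Classical

/-- `natDensity E c`: the set `E` of positive integers has natural density `c`,
i.e. `#{m ∈ E : 1 ≤ m ∧ m ≤ X}/X → c` as `X → ∞`. -/
def natDensity (E : Set ℕ) (c : ℝ) : Prop :=
  Tendsto (fun X : ℕ => (Nat.card {m : ℕ | 1 ≤ m ∧ m ≤ X ∧ m ∈ E} : ℝ) / X)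
    atTop (nhds c)

noncomputable def cnt (S : ℕ → Prop) (X : ℕ) : ℕ := ((Finset.Icc 1 X).filter S).card

noncomputable def percnt (S : ℕ → Prop) (q : ℕ) : ℕ := ((Finset.range q).filter S).card

lemma block_count (S : ℕ → Prop) (q : ℕ) (hS : ∀ m, S m ↔ S (m % q)) (t : ℕ) :
    ((Finset.Ico (q * t) (q * t + q)).filter S).card = percnt S q := by
  refine (Finset.card_nbij (fun i => q * t + i) ?_ ?_ ?_).symm
  · intro i hi
    simp only [Finset.mem_coe, Finset.mem_filter, Finset.mem_range, Finset.mem_Ico] at *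
    refine ⟨⟨by omega, by omega⟩, ?_⟩
    have hmod : (q * t + i) % q = i % q := Nat.mul_add_mod q t i
    rw [hS (q * t + i), hmod, ← hS i]
    exact hi.2
  · intro x _ y _ h; dsimp at h; omega
  · intro m hm
    simp only [Finset.coe_filter, Set.mem_setOf_eq, mem_Ico, mem_range] at hm ⊢
    refine ⟨m - q * t, ⟨⟨by omega, ?_⟩, by dsimp; omega⟩⟩
    have hmod : (q * t + (m - q * t)) % q = (m - q * t) % q := Nat.mul_add_mod q t _
    have hm' : q * t + (m - q * t) = m := by omega
    have hsm : S ((m - q * t) % q) := by rw [← hmod, hm', ← hS]; exact hm.2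
    rwa [hS (m - q * t)]

lemma range_block_count (S : ℕ → Prop) (q : ℕ) (hS : ∀ m, S m ↔ S (m % q)) (t : ℕ) :
    ((Finset.range (q * t)).filter S).card = t * percnt S q := by
  induction t with
  | zero => simp
  | succ t ih =>
    have hsplit : Finset.range (q * (t+1)) = Finset.range (q * t) ∪ Finset.Ico (q * t) (q * t + q) := by
      simp only [Finset.range_eq_Ico]
      rw [Finset.Ico_union_Ico_eq_Ico (by omega) (by omega)]
      congr 1
    have hdis : Disjoint ((Finset.range (q*t)).filter S) ((Finset.Ico (q*t) (q*t+q)).filter S) :=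
      Finset.disjoint_filter_filter (by rw [Finset.range_eq_Ico]; exact Finset.Ico_disjoint_Ico_consecutive 0 _ _)
    rw [hsplit, Finset.filter_union, Finset.card_union_of_disjoint hdis, ih, block_count S q hS]
    all_goals ring

lemma periodic_density (S : ℕ → Prop) (q : ℕ) (hq : 0 < q) (hS : ∀ m, S m ↔ S (m % q)) :
    Tendsto (fun X : ℕ => (cnt S X : ℝ) / X) atTop
      (nhds ((percnt S q : ℝ) / q)) := by
  have key : ∀ X : ℕ, 1 ≤ X →
      ((X / q) * percnt S q ≤ cnt S X + 1 ∧ cnt S X ≤ (X / q + 1) * percnt S q) := by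
    intro X hX
    set t := X / q with ht
    constructor
    · have hsub : Finset.range (q * t) ⊆ Finset.range (X + 1) := by
        apply Finset.range_subset_range.2
        have h := Nat.mul_div_le X q
        rw [← ht] at h
        omega
      have h5 := Finset.card_le_card (Finset.filter_subset_filter S hsub)
      rw [range_block_count S q hS t] at h5
      have hins : Finset.range (X + 1) ⊆ insert 0 (Finset.Icc 1 X) := by
        intro m hm; simp only [Finset.mem_range] at hm
        rcases Nat.eq_zero_or_pos m with h | h
        · simp [h]
        · simp only [Finset.mem_insert, Finset.mem_Icc]; omega
      have h3 := Finset.card_le_card (Finset.filter_subset_filter S hins)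
      have h4 : ((insert 0 (Finset.Icc 1 X)).filter S).card ≤ cnt S X + 1 := by
        unfold cnt
        calc ((insert 0 (Finset.Icc 1 X)).filter S).card
            ≤ ((Finset.Icc 1 X).filter S ∪ {0}).card := by
              apply Finset.card_le_card
              intro m hm
              simp only [Finset.mem_filter, Finset.mem_insert, Finset.mem_union, Finset.mem_singleton] at hm ⊢
              rcases hm.1 with h | h
              · right; exact h
              · left; exact ⟨h, hm.2⟩
          _ ≤ _ := (Finset.card_union_le _ _).trans (by simp)
      omega
    · have hsub : Finset.Icc 1 X ⊆ Finset.range (q * (t + 1)) := by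
        intro m hm; simp only [Finset.mem_Icc] at hm; simp only [Finset.mem_range]
        have h := Nat.lt_mul_div_succ X hq
        rw [← ht] at h
        omega
      have h5 := Finset.card_le_card (Finset.filter_subset_filter S hsub)
      rw [range_block_count S q hS (t+1)] at h5
      exact h5
  have hq' : (0:ℝ) < q := by exact_mod_cast hq
  set c := percnt S q with hc
  apply tendsto_of_tendsto_of_tendsto_of_le_of_le'
    (g := fun X : ℕ => (c:ℝ)/q - ((c:ℝ)+1)/X) (h := fun X : ℕ => (c:ℝ)/q + (c:ℝ)/X)
  · have : Tendsto (fun X : ℕ => ((c:ℝ)+1)/X) atTop (nhds 0) := tendsto_const_div_atTop_nhds_zero_nat _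
    simpa using tendsto_const_nhds.sub this
  · have : Tendsto (fun X : ℕ => (c:ℝ)/X) atTop (nhds 0) := tendsto_const_div_atTop_nhds_zero_nat _
    simpa using tendsto_const_nhds.add this
  · filter_upwards [eventually_ge_atTop 1] with X hX
    obtain ⟨hl, _⟩ := key X hX
    set t := X / q with ht
    have hX' : (0:ℝ) < X := by exact_mod_cast hX
    have h2 : X < q * (t + 1) := Nat.lt_mul_div_succ X hq
    have hl' : (t:ℝ) * c ≤ (cnt S X : ℝ) + 1 := by exact_mod_cast hl
    have h2' : (X:ℝ) < q * ((t:ℝ) + 1) := by exact_mod_cast h2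
    have hc0 : (0:ℝ) ≤ c := Nat.cast_nonneg c
    rw [sub_le_iff_le_add, ← add_div, div_le_div_iff₀ hq' hX']
    nlinarith [mul_le_mul_of_nonneg_left hl' hq'.le, mul_le_mul_of_nonneg_left h2'.le hc0]
  · filter_upwards [eventually_ge_atTop 1] with X hX
    obtain ⟨_, hu⟩ := key X hX
    set t := X / q with ht
    have hX' : (0:ℝ) < X := by exact_mod_cast hX
    have h1 : q * t ≤ X := Nat.mul_div_le X q
    have hu' : (cnt S X : ℝ) ≤ ((t:ℝ) + 1) * c := by exact_mod_cast hu
    have h1' : (q:ℝ) * t ≤ X := by exact_mod_cast h1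
    have hc0 : (0:ℝ) ≤ c := Nat.cast_nonneg c
    rw [div_add_div _ _ (ne_of_gt hq') (ne_of_gt hX'), div_le_div_iff₀ hX' (by positivity)]
    nlinarith [mul_le_mul_of_nonneg_right hu' (mul_pos hq' hX').le,
      mul_le_mul_of_nonneg_left h1' (mul_nonneg hc0 hX'.le)]

lemma percnt_congr {S S' : ℕ → Prop} (q : ℕ) (h : ∀ x, S x ↔ S' x) :
    percnt S q = percnt S' q := by
  unfold percnt
  congr 1
  apply Finset.filter_congr
  intro x _
  exact h x

lemma crt_pair (a b : ℕ) (ha : 0 < a) (hb : 0 < b) (hab : Nat.Coprime a b)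
    (P1 P2 : ℕ → Prop) (h1 : ∀ m, P1 m ↔ P1 (m % a)) (h2 : ∀ m, P2 m ↔ P2 (m % b)) :
    percnt (fun k => P1 k ∧ P2 k) (a * b) = percnt P1 a * percnt P2 b := by
  unfold percnt
  rw [← Finset.card_product]
  have hprod : (Finset.range a).filter P1 ×ˢ (Finset.range b).filter P2
      = ((Finset.range a) ×ˢ (Finset.range b)).filter (fun x => P1 x.1 ∧ P2 x.2) := by
    ext x; simp only [Finset.mem_product, Finset.mem_filter]; tauto
  rw [hprod]
  apply Finset.card_bij' (fun k _ => (k % a, k % b))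
    (fun x _ => (Nat.chineseRemainder hab x.1 x.2 : ℕ))
  · intro k hk
    simp only [Finset.mem_filter, Finset.mem_range, Finset.mem_product] at hk ⊢
    exact ⟨⟨Nat.mod_lt _ ha, Nat.mod_lt _ hb⟩, ⟨(h1 k).1 hk.2.1, (h2 k).1 hk.2.2⟩⟩
  · intro x hx
    simp only [Finset.mem_filter, Finset.mem_range, Finset.mem_product] at hx ⊢
    obtain ⟨⟨hxa, hxb⟩, hP1, hP2⟩ := hx
    set k := (Nat.chineseRemainder hab x.1 x.2 : ℕ) with hk
    have hprop := (Nat.chineseRemainder hab x.1 x.2).2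
    have hklt : k < a * b := Nat.chineseRemainder_lt_mul hab x.1 x.2 ha.ne' hb.ne'
    have hma : k % a = x.1 := by
      have : k % a = x.1 % a := hprop.1
      rw [this, Nat.mod_eq_of_lt hxa]
    have hmb : k % b = x.2 := by
      have : k % b = x.2 % b := hprop.2
      rw [this, Nat.mod_eq_of_lt hxb]
    refine ⟨hklt, ?_, ?_⟩
    · rw [h1 k, hma]; exact hP1
    · rw [h2 k, hmb]; exact hP2
  · intro k hk
    simp only [Finset.mem_filter, Finset.mem_range] at hk
    have hprop := (Nat.chineseRemainder hab (k % a) (k % b)).2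
    have hklt : (Nat.chineseRemainder hab (k % a) (k % b) : ℕ) < a * b :=
      Nat.chineseRemainder_lt_mul hab _ _ ha.ne' hb.ne'
    have hca : (Nat.chineseRemainder hab (k % a) (k % b) : ℕ) ≡ k [MOD a] :=
      hprop.1.trans (Nat.mod_modEq k a)
    have hcb : (Nat.chineseRemainder hab (k % a) (k % b) : ℕ) ≡ k [MOD b] :=
      hprop.2.trans (Nat.mod_modEq k b)
    have : (Nat.chineseRemainder hab (k % a) (k % b) : ℕ) ≡ k [MOD a * b] :=
      (Nat.modEq_and_modEq_iff_modEq_mul hab).1 ⟨hca, hcb⟩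
    exact Nat.ModEq.eq_of_lt_of_lt this hklt hk.1
  · intro x hx
    simp only [Finset.mem_filter, Finset.mem_product, Finset.mem_range] at hx
    have hprop := (Nat.chineseRemainder hab x.1 x.2).2
    have e1 : (Nat.chineseRemainder hab x.1 x.2 : ℕ) % a = x.1 := by
      have : _ % a = x.1 % a := hprop.1
      rw [this, Nat.mod_eq_of_lt hx.1.1]
    have e2 : (Nat.chineseRemainder hab x.1 x.2 : ℕ) % b = x.2 := by
      have : _ % b = x.2 % b := hprop.2
      rw [this, Nat.mod_eq_of_lt hx.1.2]
    exact Prod.ext e1 e2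

lemma crt_prod (P : Finset ℕ) (ν : ℕ → ℕ) (C : ℕ → ℕ → Prop) :
    ∀ (_hν : ∀ p ∈ P, 0 < ν p)
    (_hco : ∀ p ∈ P, ∀ q ∈ P, p ≠ q → Nat.Coprime (ν p) (ν q))
    (_hC : ∀ p ∈ P, ∀ m, C p m ↔ C p (m % ν p)),
    percnt (fun k => ∀ p ∈ P, C p k) (∏ p ∈ P, ν p) = ∏ p ∈ P, percnt (C p) (ν p) := by
  induction P using Finset.induction_on with
  | empty =>
    intro _ _ _
    simp [percnt]
  | insert p s hp ih =>
    intro hν hco hC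
    rw [Finset.prod_insert hp, Finset.prod_insert hp]
    have hstep : percnt (fun k => ∀ q ∈ insert p s, C q k) (ν p * ∏ q ∈ s, ν q)
        = percnt (fun k => C p k ∧ ∀ q ∈ s, C q k) (ν p * ∏ q ∈ s, ν q) := by
      apply percnt_congr
      intro x
      simp [Finset.forall_mem_insert]
    rw [hstep]
    have hbpos : 0 < ∏ q ∈ s, ν q :=
      Finset.prod_pos (fun q hq => hν q (Finset.mem_insert_of_mem hq))
    have hcop : Nat.Coprime (ν p) (∏ q ∈ s, ν q) :=
      Nat.Coprime.prod_right (fun q hq =>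
        hco p (Finset.mem_insert_self p s) q (Finset.mem_insert_of_mem hq)
          (fun h => hp (h ▸ hq)))
    rw [crt_pair (ν p) (∏ q ∈ s, ν q) (hν p (Finset.mem_insert_self p s)) hbpos hcop
      (C p) (fun k => ∀ q ∈ s, C q k)
      (hC p (Finset.mem_insert_self p s))
      ?_]
    · rw [ih (fun q hq => hν q (Finset.mem_insert_of_mem hq))
        (fun q hq r hr hqr => hco q (Finset.mem_insert_of_mem hq) r (Finset.mem_insert_of_mem hr) hqr)
        (fun q hq => hC q (Finset.mem_insert_of_mem hq))]
    · intro m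
      constructor
      · intro h q hq
        rw [hC q (Finset.mem_insert_of_mem hq) _,
          Nat.mod_mod_of_dvd _ (Finset.dvd_prod_of_mem ν hq), ← hC q (Finset.mem_insert_of_mem hq) m]
        exact h q hq
      · intro h q hq
        rw [hC q (Finset.mem_insert_of_mem hq) m,
          ← Nat.mod_mod_of_dvd _ (Finset.dvd_prod_of_mem ν hq), ← hC q (Finset.mem_insert_of_mem hq) _]
        exact h q hq

lemma percnt_zmod (N : ℕ) [NeZero N] (T : ZMod N → Prop) [DecidablePred T] :
    percnt (fun x => T (x : ZMod N)) N = (Finset.univ.filter T).card := by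
  unfold percnt
  refine Finset.card_nbij (fun x => ((x : ℕ) : ZMod N)) ?_ ?_ ?_
  · intro x hx
    simp only [Finset.mem_coe, Finset.mem_filter, Finset.mem_range, Finset.mem_univ, true_and] at hx ⊢
    exact hx.2
  · intro x hx y hy h
    simp only [Finset.coe_filter, Set.mem_setOf_eq, Finset.mem_range] at hx hy
    exact Nat.ModEq.eq_of_lt_of_lt ((ZMod.natCast_eq_natCast_iff _ _ _).1 h) hx.1 hy.1
  · intro y hy
    simp only [Finset.coe_filter, Set.mem_setOf_eq, Finset.mem_univ, true_and,
      Finset.mem_range] at hy ⊢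
    refine ⟨y.val, ⟨⟨ZMod.val_lt y, ?_⟩, ZMod.natCast_rightInverse y⟩⟩
    rw [ZMod.natCast_rightInverse y]
    exact hy

lemma pow_one_add_of_sq_zero {R : Type*} [CommRing R] (c : R) (hc : c * c = 0) (k : ℕ) :
    (1 + c) ^ k = 1 + (k : R) * c := by
  induction k with
  | zero => simp
  | succ k ih =>
    have key : (1 + (k:R)*c) * (1+c) = 1 + ((k:R)+1)*c + (k:R)*(c*c) := by ring
    rw [pow_succ, ih, key, hc, mul_zero, add_zero]
    push_cast
    ring

lemma card_solution (p : ℕ) (hp : p.Prime) :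
    percnt (fun x => x ^ p ≡ x [MOD p ^ 2]) (p ^ 2) = p := by
  haveI : Fact p.Prime := ⟨hp⟩
  haveI : NeZero (p ^ 2) := ⟨pow_ne_zero 2 hp.pos.ne'⟩
  haveI : Fact (1 < p ^ 2) := ⟨by nlinarith [hp.one_lt]⟩
  have h1 : percnt (fun x => x ^ p ≡ x [MOD p ^ 2]) (p ^ 2)
      = (Finset.univ.filter (fun y : ZMod (p ^ 2) => y ^ p = y)).card := by
    rw [← percnt_zmod (p ^ 2) (fun y : ZMod (p ^ 2) => y ^ p = y)]
    apply percnt_congr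
    intro x
    rw [← ZMod.natCast_eq_natCast_iff]
    push_cast
    rfl
  rw [h1]
  have hp2 : ((p : ZMod (p ^ 2))) ^ 2 = 0 := by
    rw [← Nat.cast_pow, ZMod.natCast_self]
  have nonunit_p_dvd : ∀ y : ZMod (p ^ 2), ¬IsUnit y → p ∣ y.val := by
    intro y hy
    by_contra hdvd
    have hco : Nat.Coprime y.val p := (Nat.coprime_comm.1 ((hp.coprime_iff_not_dvd).2 hdvd))
    have : IsUnit ((y.val : ℕ) : ZMod (p ^ 2)) :=
      (ZMod.isUnit_iff_coprime _ _).2 (hco.pow_right 2)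
    rw [ZMod.natCast_rightInverse y] at this
    exact hy this
  have nonunit_sq : ∀ y : ZMod (p ^ 2), ¬IsUnit y → y * y = 0 := by
    intro y hy
    obtain ⟨t, ht⟩ := nonunit_p_dvd y hy
    have hy' : y = ((p * t : ℕ) : ZMod (p ^ 2)) := by
      rw [← ht, ZMod.natCast_rightInverse y]
    rw [hy']
    push_cast
    calc ((p : ZMod (p^2)) * t) * ((p : ZMod (p^2)) * t)
        = ((p : ZMod (p^2)) ^ 2) * ((t : ZMod (p^2)) * t) := by ring
      _ = 0 := by rw [hp2, zero_mul]
  have nonunit_pow_p : ∀ y : ZMod (p ^ 2), ¬IsUnit y → y ^ p = 0 := by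
    intro y hy
    have h2 : y ^ 2 = 0 := by rw [pow_two y]; exact nonunit_sq y hy
    have hsplit : y ^ p = y ^ 2 * y ^ (p - 2) := by
      rw [← pow_add]; congr 1; have := hp.two_le; omega
    rw [hsplit, h2, zero_mul]
  have sol_zero : ∀ y : ZMod (p ^ 2), y ^ p = y → ¬IsUnit y → y = 0 := fun y hs hy => by
    rw [← hs, nonunit_pow_p y hy]
  have unit_ppow : ∀ u : (ZMod (p ^ 2))ˣ, u ^ (p * (p - 1)) = 1 := by
    intro u
    have hcard : Fintype.card (ZMod (p ^ 2))ˣ = p * (p - 1) := by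
      rw [ZMod.card_units_eq_totient, Nat.totient_prime_pow hp (by norm_num : 0 < 2)]
      norm_num
    rw [← hcard]; exact pow_card_eq_one
  have unit_sol : ∀ y : ZMod (p ^ 2), IsUnit y → y ^ p = y → y ^ (p - 1) = 1 := by
    intro y hy hs
    have hstep : y ^ (p - 1) * y = 1 * y := by
      rw [one_mul, ← pow_succ]
      have he : p - 1 + 1 = p := by have := hp.two_le; omega
      rw [he, hs]
    exact hy.mul_right_cancel hstep
  set Ψ := ZMod.castHom (dvd_pow_self p (two_ne_zero)) (ZMod p) with hΨdef
  have ker : ∀ z : ZMod (p ^ 2), Ψ z = 0 → ∃ t : ℕ, z = ((p * t : ℕ) : ZMod (p ^ 2)) := by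
    intro z hz
    have hz' : Ψ z = ((z.val : ℕ) : ZMod p) := by
      conv_lhs => rw [← ZMod.natCast_rightInverse z]
      rw [map_natCast]
    rw [hz'] at hz
    obtain ⟨t, ht⟩ := (ZMod.natCast_eq_zero_iff _ _).1 hz
    refine ⟨t, ?_⟩
    rw [← ht, ZMod.natCast_rightInverse z]
  have main : (Finset.univ.filter (fun y : ZMod (p ^ 2) => y ^ p = y)).card
      = Fintype.card (ZMod p) := by
    rw [← Finset.card_univ]
    refine Finset.card_nbij (fun y => Ψ y) (fun y _ => Finset.mem_univ _) ?_ ?_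
    · -- InjOn
      intro x hx y hy hxy
      simp only [Finset.coe_filter, Set.mem_setOf_eq, Finset.mem_univ, true_and] at hx hy
      dsimp at hxy
      by_cases hux : IsUnit x
      · by_cases huy : IsUnit y
        · obtain ⟨u, rfl⟩ := hux
          obtain ⟨v, rfl⟩ := huy
          set w : ZMod (p ^ 2) := ↑(u * v⁻¹) with hw
          have hΨw : Ψ w = 1 := by
            rw [hw, Units.val_mul, map_mul, hxy, ← map_mul, ← Units.val_mul,
              mul_inv_cancel, Units.val_one, map_one]
          have hu1' : u ^ (p - 1) = 1 := Units.ext (by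
            rw [Units.val_pow_eq_pow_val, Units.val_one]
            exact unit_sol _ u.isUnit hx)
          have hv1' : v ^ (p - 1) = 1 := Units.ext (by
            rw [Units.val_pow_eq_pow_val, Units.val_one]
            exact unit_sol _ v.isUnit hy)
          have hw1 : w ^ (p - 1) = 1 := by
            have huv : (u * v⁻¹) ^ (p - 1) = 1 := by
              rw [mul_pow, hu1', inv_pow, hv1', inv_one, mul_one]
            rw [hw, ← Units.val_pow_eq_pow_val, huv, Units.val_one]
          have hker : Ψ (w - 1) = 0 := by rw [map_sub, hΨw, map_one, sub_self]
          obtain ⟨t, htw⟩ := ker (w - 1) hker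
          have hcc : (w - 1) * (w - 1) = 0 := by
            rw [htw]
            push_cast
            calc ((p : ZMod (p^2)) * t) * ((p : ZMod (p^2)) * t)
                = ((p : ZMod (p^2)) ^ 2) * ((t : ZMod (p^2)) * t) := by ring
              _ = 0 := by rw [hp2, zero_mul]
          have hwc : w = 1 + (w - 1) := by ring
          have hpow := pow_one_add_of_sq_zero (w - 1) hcc (p - 1)
          have h' : (1 : ZMod (p^2)) + ((p - 1 : ℕ) : ZMod (p^2)) * (w - 1) = 1 := by
            rw [← hpow, ← hwc, hw1]
          have hzero : ((p - 1 : ℕ) : ZMod (p ^ 2)) * (w - 1) = 0 := by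
            linear_combination h'
          have hunit : IsUnit ((p - 1 : ℕ) : ZMod (p ^ 2)) := by
            have hnd : ¬ p ∣ (p - 1) := by
              intro h
              have h2 := hp.two_le
              have := Nat.le_of_dvd (by omega) h
              omega
            have hco : Nat.Coprime (p - 1) p := Nat.coprime_comm.1 ((hp.coprime_iff_not_dvd).2 hnd)
            exact (ZMod.isUnit_iff_coprime _ _).2 (hco.pow_right 2)
          have hc0 : w - 1 = 0 := (hunit.mul_right_eq_zero).1 hzero
          have hw1' : w = 1 := by linear_combination hc0
          have huv1 : u * v⁻¹ = 1 := Units.ext (by rw [← hw, hw1', Units.val_one])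
          have := mul_eq_one_iff_eq_inv.1 huv1
          rw [inv_inv] at this
          rw [this]
        · exfalso
          have h0 : Ψ x = 0 := by rw [hxy, sol_zero y hy huy, _root_.map_zero]
          exact (hux.map Ψ).ne_zero h0
      · have hx0 : x = 0 := sol_zero x hx hux
        by_cases huy : IsUnit y
        · exfalso
          have h0 : Ψ y = 0 := by rw [← hxy, hx0, _root_.map_zero]
          exact (huy.map Ψ).ne_zero h0
        · rw [hx0, sol_zero y hy huy]
    · -- SurjOn
      intro a _
      set b : ZMod (p ^ 2) := ((a.val : ℕ) : ZMod (p ^ 2)) with hb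
      have hΨb : Ψ b = a := by
        rw [hb, map_natCast]
        exact ZMod.natCast_rightInverse a
      refine ⟨b ^ p, ?_, ?_⟩
      · simp only [Finset.coe_filter, Set.mem_setOf_eq, Finset.mem_univ, true_and]
        by_cases hub : IsUnit b
        · obtain ⟨u, hu⟩ := hub
          rw [← hu]
          have hsplit : ((↑u : ZMod (p ^ 2)) ^ p) ^ p
              = (↑u : ZMod (p ^ 2)) ^ p * ((↑u : ZMod (p ^ 2)) ^ (p * (p - 1))) := by
            rw [← pow_mul, ← pow_add]
            congr 1
            obtain ⟨k, hk⟩ : ∃ k, p = k + 1 := ⟨p - 1, by have := hp.two_le; omega⟩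
            subst hk
            simp
            ring
          have hu1 : (↑u : ZMod (p ^ 2)) ^ (p * (p - 1)) = 1 := by
            rw [← Units.val_pow_eq_pow_val, unit_ppow u, Units.val_one]
          rw [hsplit, hu1, mul_one]
        · rw [nonunit_pow_p b hub]
          exact zero_pow hp.pos.ne'
      · dsimp
        rw [map_pow, hΨb, ZMod.pow_card]
  rw [main, ZMod.card]

noncomputable def gfun (Q : Finset ℕ) (d : ℕ) : ℝ :=
  if ∀ q ∈ Q, ¬ q ∣ d then (moebius d : ℝ) / (d : ℝ) ^ 2 else 0

noncomputable def hfun (p : ℕ) (Q : Finset ℕ) (d : ℕ) : ℝ :=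
  if p ∣ d ∧ ∀ q ∈ Q, ¬ q ∣ d then (moebius d : ℝ) / (d : ℝ) ^ 2 else 0

lemma summable_aux (c : ℕ → Prop) [DecidablePred c] :
    Summable (fun d : ℕ => if c d then (moebius d : ℝ) / (d : ℝ) ^ 2 else 0) := by
  apply Summable.of_norm_bounded (g := fun d : ℕ => 1 / (d : ℝ) ^ 2)
    ((Real.summable_one_div_nat_pow).2 one_lt_two)
  intro d
  rcases Nat.eq_zero_or_pos d with rfl | hd
  · simp
  have hd2 : (0:ℝ) < (d:ℝ)^2 := by positivity
  rw [Real.norm_eq_abs]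
  split_ifs with hc
  · rw [abs_div, abs_of_nonneg hd2.le]
    gcongr
    have h1 : |moebius d| ≤ 1 := abs_moebius_le_one
    exact_mod_cast h1
  · simp only [abs_zero]
    positivity

lemma moebius_tsum : ∑' d : ℕ, ((moebius d : ℝ) / (d : ℝ) ^ 2) = 6 / Real.pi ^ 2 := by
  have h2 : (1 : ℝ) < (2 : ℂ).re := by norm_num
  have hz := LSeries_zeta_eq_riemannZeta h2
  have hmul := ArithmeticFunction.LSeries_zeta_mul_Lseries_moebius h2
  rw [hz, riemannZeta_two] at hmul
  have hpne : ((Real.pi : ℂ)) ^ 2 ≠ 0 := pow_ne_zero 2 (by exact_mod_cast Real.pi_ne_zero)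
  have hL : LSeries (fun n => (moebius n : ℂ)) 2 = 6 / (Real.pi : ℂ) ^ 2 := by
    rw [eq_div_iff hpne]
    linear_combination 6 * hmul
  have hterm : ∀ n : ℕ, LSeries.term (fun n => (moebius n : ℂ)) 2 n
      = (((moebius n : ℝ) / (n : ℝ) ^ 2 : ℝ) : ℂ) := by
    intro n
    rcases Nat.eq_zero_or_pos n with rfl | hn
    · simp [LSeries.term]
    · rw [LSeries.term_def, if_neg hn.ne']
      have he : (n : ℂ) ^ (2 : ℂ) = (n : ℂ) ^ (2 : ℕ) := by
        rw [show (2:ℂ) = ((2:ℕ):ℂ) by norm_num, Complex.cpow_natCast]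
      rw [he]
      push_cast
      ring
  have key : Complex.ofReal (∑' d : ℕ, ((moebius d : ℝ) / (d : ℝ) ^ 2)) = 6 / (Real.pi : ℂ) ^ 2 := by
    rw [Complex.ofReal_tsum, ← hL]
    exact tsum_congr (fun n => (hterm n).symm)
  apply Complex.ofReal_injective
  rw [key]
  push_cast
  ring

lemma gfun_split (p : ℕ) (s : Finset ℕ) (hp : p ∉ s) (d : ℕ) :
    gfun s d = gfun (insert p s) d + hfun p s d := by
  by_cases hpd : p ∣ d
  · have h1 : gfun (insert p s) d = 0 := by
      unfold gfun
      exact if_neg (fun hall => hall p (Finset.mem_insert_self p s) hpd)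
    have h2 : hfun p s d = gfun s d := by
      unfold hfun gfun
      by_cases hC : ∀ q ∈ s, ¬ q ∣ d
      · rw [if_pos ⟨hpd, hC⟩, if_pos hC]
      · rw [if_neg (fun hx => hC hx.2), if_neg hC]
    rw [h1, h2, zero_add]
  · have h1 : hfun p s d = 0 := by
      unfold hfun
      exact if_neg (fun hx => hpd hx.1)
    have h2 : gfun (insert p s) d = gfun s d := by
      unfold gfun
      by_cases hC : ∀ q ∈ s, ¬ q ∣ d
      · rw [if_pos hC, if_pos ?_]
        intro q hq
        rcases Finset.mem_insert.1 hq with rfl | hq'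
        · exact hpd
        · exact hC q hq'
      · rw [if_neg (fun hall => hC (fun q hq => hall q (Finset.mem_insert_of_mem hq))), if_neg hC]
    rw [h1, h2, add_zero]

lemma tsum_coprime (P : Finset ℕ) (hP : ∀ p ∈ P, p.Prime) :
    (∏ p ∈ P, (1 - 1 / (p : ℝ) ^ 2)) * (∑' d : ℕ, gfun P d) = 6 / Real.pi ^ 2 := by
  induction P using Finset.induction_on with
  | empty =>
    simp only [Finset.prod_empty, one_mul]
    rw [← moebius_tsum]
    apply tsum_congr
    intro d
    unfold gfun
    rw [if_pos (fun q hq => absurd hq (Finset.notMem_empty q))]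
  | insert p s hp ih =>
    have hpp : p.Prime := hP p (Finset.mem_insert_self p s)
    have hps : ∀ q ∈ s, q.Prime := fun q hq => hP q (Finset.mem_insert_of_mem hq)
    have hsg : Summable (gfun (insert p s)) := summable_aux _
    have hsh : Summable (hfun p s) := summable_aux _
    have hsum : ∑' d, gfun s d = ∑' d, gfun (insert p s) d + ∑' d, hfun p s d := by
      rw [← Summable.tsum_add hsg hsh]
      exact tsum_congr (gfun_split p s hp)
    have hinj : Function.Injective (fun d : ℕ => p * d) := fun a b hab => by
      dsimp at hab
      exact Nat.eq_of_mul_eq_mul_left hpp.pos hab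
    have hsupp : Function.support (hfun p s) ⊆ Set.range (fun d : ℕ => p * d) := by
      intro d hd
      rw [Function.mem_support] at hd
      by_cases hc : p ∣ d ∧ ∀ q ∈ s, ¬ q ∣ d
      · obtain ⟨t, ht⟩ := hc.1
        exact ⟨t, ht.symm⟩
      · exact absurd (if_neg hc) hd
    have hval : ∀ d' : ℕ, hfun p s (p * d') = (-1 / (p:ℝ)^2) * gfun (insert p s) d' := by
      intro d'
      by_cases hpd' : p ∣ d'
      · have hmu : moebius (p * d') = 0 := by
          apply moebius_eq_zero_of_not_squarefree
          intro hsf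
          have hdd : p * p ∣ p * d' := mul_dvd_mul_left p hpd'
          exact absurd (Nat.isUnit_iff.1 (hsf p hdd)) (by have := hpp.two_le; omega)
        have hg0 : gfun (insert p s) d' = 0 := by
          unfold gfun
          exact if_neg (fun hall => hall p (Finset.mem_insert_self p s) hpd')
        rw [hg0, mul_zero]
        unfold hfun
        split_ifs with hc
        · rw [hmu]; norm_num
        · rfl
      · have hcond : ∀ q ∈ s, (q ∣ p * d' ↔ q ∣ d') := by
          intro q hq
          have hq' : q.Prime := hps q hq
          have hqp : q ≠ p := fun he => hp (he ▸ hq)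
          constructor
          · intro hd
            rcases (Nat.Prime.dvd_mul hq').1 hd with h1 | h1
            · exact absurd ((Nat.prime_dvd_prime_iff_eq hq' hpp).1 h1) hqp
            · exact h1
          · intro hd
            exact hd.mul_left p
        have hmu : (moebius (p * d') : ℝ) = - (moebius d' : ℝ) := by
          have hco : Nat.Coprime p d' := (hpp.coprime_iff_not_dvd).2 hpd'
          rw [isMultiplicative_moebius.map_mul_of_coprime hco,
            ArithmeticFunction.moebius_apply_prime hpp]
          push_cast
          ring
        unfold hfun gfun
        by_cases hC : ∀ q ∈ s, ¬ q ∣ d'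
        · rw [if_pos ⟨Dvd.intro d' rfl, fun q hq hdv => hC q hq ((hcond q hq).1 hdv)⟩,
            if_pos ?_]
          · rw [hmu]
            have hd0 : d' ≠ 0 := fun he => hpd' (he ▸ dvd_zero p)
            have hpr : ((p:ℝ)) ≠ 0 := by exact_mod_cast hpp.pos.ne'
            have hdr : ((d':ℝ)) ≠ 0 := by exact_mod_cast hd0
            push_cast
            rw [mul_pow]
            field_simp
          · intro q hq
            rcases Finset.mem_insert.1 hq with rfl | hq'
            · exact hpd'
            · exact hC q hq'
        · rw [if_neg ?_, if_neg ?_, mul_zero]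
          · intro hall
            exact hC (fun q hq => hall q (Finset.mem_insert_of_mem hq))
          · intro hx
            exact hC (fun q hq hdv => hx.2 q hq ((hcond q hq).2 hdv))
    have htsum_h : ∑' d, hfun p s d = (-1 / (p:ℝ)^2) * ∑' d, gfun (insert p s) d := by
      rw [← hinj.tsum_eq hsupp, tsum_congr (fun d' => hval d'), tsum_mul_left]
    rw [Finset.prod_insert hp]
    have hgoal : ∑' d, gfun s d = (1 - 1/(p:ℝ)^2) * ∑' d, gfun (insert p s) d := by
      rw [hsum, htsum_h]; ring
    calc (1 - 1/(p:ℝ)^2) * (∏ q ∈ s, (1 - 1/(q:ℝ)^2)) * ∑' d, gfun (insert p s) d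
        = (∏ q ∈ s, (1 - 1/(q:ℝ)^2)) * ((1 - 1/(p:ℝ)^2) * ∑' d, gfun (insert p s) d) := by ring
      _ = (∏ q ∈ s, (1 - 1/(q:ℝ)^2)) * ∑' d, gfun s d := by rw [hgoal]
      _ = 6 / Real.pi ^ 2 := ih hps

noncomputable def Jf (m : ℕ) : ℕ := m.factorization.prod fun p e => p ^ (e / 2)

lemma Jf_ne_zero (m : ℕ) : Jf m ≠ 0 := by
  unfold Jf
  rw [Finsupp.prod]
  apply Finset.prod_ne_zero_iff.2
  intro p hp
  rw [Nat.support_factorization] at hp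
  exact pow_ne_zero _ (Nat.prime_of_mem_primeFactors hp).pos.ne'

lemma Jf_factorization (m : ℕ) (hm : m ≠ 0) (q : ℕ) :
    (Jf m).factorization q = m.factorization q / 2 := by
  unfold Jf
  rw [Finsupp.prod]
  rw [Nat.factorization_prod (fun p hp => by
    rw [Nat.support_factorization] at hp
    exact pow_ne_zero _ (Nat.prime_of_mem_primeFactors hp).pos.ne')]
  rw [Finset.sum_apply']
  have heach : ∀ p ∈ m.factorization.support,
      ((p ^ (m.factorization p / 2)).factorization) q
        = if p = q then m.factorization p / 2 else 0 := by
    intro p hp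
    rw [Nat.support_factorization] at hp
    rw [(Nat.prime_of_mem_primeFactors hp).factorization_pow, Finsupp.single_apply]
  rw [Finset.sum_congr rfl heach, Finset.sum_ite_eq' m.factorization.support q
    (fun p => m.factorization p / 2)]

  split_ifs with hq
  · rfl
  · rw [Finsupp.notMem_support_iff.1 hq]
    simp

lemma Jf_dvd_iff (m : ℕ) (hm : m ≠ 0) (d : ℕ) (hd : d ≠ 0) :
    d ^ 2 ∣ m ↔ d ∣ Jf m := by
  rw [← Nat.factorization_le_iff_dvd (pow_ne_zero 2 hd) hm,
    ← Nat.factorization_le_iff_dvd hd (Jf_ne_zero m)]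
  rw [Nat.factorization_pow]
  rw [Finsupp.le_def, Finsupp.le_def]
  constructor
  · intro h q
    have hq := h q
    simp only [Finsupp.smul_apply, smul_eq_mul] at hq
    rw [Jf_factorization m hm q]
    omega
  · intro h q
    have hq := h q
    rw [Jf_factorization m hm q] at hq
    simp only [Finsupp.smul_apply, smul_eq_mul]
    omega

lemma Jf_sq_dvd (m : ℕ) (hm : m ≠ 0) : Jf m ^ 2 ∣ m :=
  (Jf_dvd_iff m hm (Jf m) (Jf_ne_zero m)).2 dvd_rfl

lemma Jf_le (m : ℕ) (hm : m ≠ 0) : Jf m ≤ m := by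
  have h1 : Jf m ≤ Jf m ^ 2 := Nat.le_self_pow (by norm_num) _
  exact h1.trans (Nat.le_of_dvd (Nat.pos_of_ne_zero hm) (Jf_sq_dvd m hm))

lemma Jf_eq_one_iff (m : ℕ) (hm : m ≠ 0) : Squarefree m ↔ Jf m = 1 := by
  rw [Nat.squarefree_iff_factorization_le_one hm]
  constructor
  · intro h
    by_contra h1
    obtain ⟨p, hp, hpd⟩ := Nat.exists_prime_and_dvd h1
    have := Nat.Prime.factorization_pos_of_dvd hp (Jf_ne_zero m) hpd
    rw [Jf_factorization m hm p] at this
    have := h p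
    omega
  · intro h p
    have := Jf_factorization m hm p
    rw [h, Nat.factorization_one] at this
    simp only [Finsupp.coe_zero, Pi.zero_apply] at this
    omega

lemma moebius_indicator (m : ℕ) (hm : 0 < m) (X : ℕ) (hmX : m ≤ X) :
    (∑ d ∈ (Finset.Icc 1 X).filter (fun d => d ^ 2 ∣ m), (moebius d : ℤ))
      = if Squarefree m then 1 else 0 := by
  have hm' : m ≠ 0 := hm.ne'
  have hset : (Finset.Icc 1 X).filter (fun d => d ^ 2 ∣ m) = (Jf m).divisors := by
    ext d
    simp only [Finset.mem_filter, Finset.mem_Icc, Nat.mem_divisors]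
    constructor
    · rintro ⟨⟨hd1, _⟩, hdvd⟩
      exact ⟨(Jf_dvd_iff m hm' d (by omega)).1 hdvd, Jf_ne_zero m⟩
    · rintro ⟨hdvd, _⟩
      have hd0 : d ≠ 0 := by
        rintro rfl
        exact Jf_ne_zero m (Nat.eq_zero_of_zero_dvd hdvd)
      have hdle : d ≤ Jf m := Nat.le_of_dvd (Nat.pos_of_ne_zero (Jf_ne_zero m)) hdvd
      refine ⟨⟨by omega, hdle.trans ((Jf_le m hm').trans hmX)⟩, (Jf_dvd_iff m hm' d hd0).2 hdvd⟩
  rw [hset]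
  have hmz := ArithmeticFunction.moebius_mul_coe_zeta
  have happ : ((moebius * ↑zeta : ArithmeticFunction ℤ)) (Jf m)
      = ∑ i ∈ (Jf m).divisors, moebius i := ArithmeticFunction.coe_mul_zeta_apply
  rw [hmz] at happ
  rw [← happ, ArithmeticFunction.one_apply]
  by_cases hsf : Squarefree m
  · rw [if_pos ((Jf_eq_one_iff m hm').1 hsf), if_pos hsf]
  · rw [if_neg (fun h => hsf ((Jf_eq_one_iff m hm').2 h)), if_neg hsf]

lemma moebius_indicator' (m X : ℕ) (hm : 1 ≤ m) (hmX : m ≤ X) :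
    (if Squarefree m then (1:ℤ) else 0)
      = ∑ d ∈ Finset.Icc 1 X, (if d ^ 2 ∣ m then (moebius d : ℤ) else 0) := by
  rw [← moebius_indicator m hm X hmX]
  exact Finset.sum_filter _ _

lemma percnt_mem {S : ℕ → Prop} {q j : ℕ} :
    j ∈ (Finset.range q).filter S ↔ j < q ∧ S j := by
  rw [Finset.mem_filter, Finset.mem_range]

def goodP (P : Finset ℕ) (m : ℕ) : Prop := ∀ p ∈ P, ¬ m ^ p ≡ m [MOD p ^ 2]

def Qb (P : Finset ℕ) : ℕ := ∏ p ∈ P, p ^ 2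

def Sd (P : Finset ℕ) (d m : ℕ) : Prop := d ^ 2 ∣ m ∧ goodP P m

lemma Qb_pos (P : Finset ℕ) (hP : ∀ p ∈ P, p.Prime) : 0 < Qb P :=
  Finset.prod_pos (fun p hp => pow_pos (hP p hp).pos 2)

lemma goodP_congr (P : Finset ℕ) {a b : ℕ} (h : a ≡ b [MOD Qb P]) :
    goodP P a ↔ goodP P b := by
  unfold goodP
  apply forall₂_congr
  intro p hp
  have hdvd : p ^ 2 ∣ Qb P := Finset.dvd_prod_of_mem _ hp
  have hab : a ≡ b [MOD p ^ 2] := h.of_dvd hdvd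
  have hpow : a ^ p ≡ b ^ p [MOD p ^ 2] := hab.pow p
  constructor
  · intro hn hc
    exact hn (hpow.trans (hc.trans hab.symm))
  · intro hn hc
    exact hn (hpow.symm.trans (hc.trans hab))

lemma Sd_periodic (P : Finset ℕ) (hP : ∀ p ∈ P, p.Prime) (d : ℕ) (m : ℕ) :
    Sd P d m ↔ Sd P d (m % (d ^ 2 * Qb P)) := by
  unfold Sd
  have h1 : d ^ 2 ∣ m ↔ d ^ 2 ∣ m % (d ^ 2 * Qb P) := by
    rw [Nat.dvd_mod_iff (Dvd.intro _ rfl)]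
  have h2 : goodP P m ↔ goodP P (m % (d ^ 2 * Qb P)) := by
    apply goodP_congr
    exact ((Nat.mod_modEq m (d ^ 2 * Qb P)).symm).of_dvd (Dvd.intro_left _ rfl)
  rw [← h1, ← h2]

-- count of nonsolutions
lemma card_nonsolution (p : ℕ) (hp : p.Prime) :
    percnt (fun x => ¬ x ^ p ≡ x [MOD p ^ 2]) (p ^ 2) = p ^ 2 - p := by
  have h1 := card_solution p hp
  have h2 : percnt (fun x => x ^ p ≡ x [MOD p ^ 2]) (p ^ 2)
      + percnt (fun x => ¬ x ^ p ≡ x [MOD p ^ 2]) (p ^ 2) = p ^ 2 := by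
    unfold percnt
    rw [Finset.card_filter_add_card_filter_not, Finset.card_range]
  omega

lemma percnt_unit_mul (p : ℕ) (hp : p.Prime) (d : ℕ) (hpd : ¬ p ∣ d) :
    percnt (fun j => ¬ (d ^ 2 * j) ^ p ≡ d ^ 2 * j [MOD p ^ 2]) (p ^ 2)
      = p ^ 2 - p := by
  haveI : NeZero (p ^ 2) := ⟨pow_ne_zero 2 hp.pos.ne'⟩
  have hco : Nat.Coprime (d ^ 2) (p ^ 2) :=
    Nat.Coprime.pow 2 2 ((Nat.coprime_comm.1 ((hp.coprime_iff_not_dvd).2 hpd)))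
  have hc : IsUnit ((d ^ 2 : ℕ) : ZMod (p ^ 2)) := (ZMod.isUnit_iff_coprime _ _).2 hco
  set c : ZMod (p ^ 2) := ((d ^ 2 : ℕ) : ZMod (p ^ 2)) with hcdef
  have step1 : percnt (fun j => ¬ (d ^ 2 * j) ^ p ≡ d ^ 2 * j [MOD p ^ 2]) (p ^ 2)
      = (Finset.univ.filter (fun y : ZMod (p ^ 2) => ¬ (c * y) ^ p = c * y)).card := by
    rw [← percnt_zmod (p ^ 2) (fun y : ZMod (p ^ 2) => ¬ (c * y) ^ p = c * y)]
    apply percnt_congr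
    intro j
    rw [← ZMod.natCast_eq_natCast_iff]
    push_cast
    rw [hcdef]
    push_cast
    tauto
  have step3 : percnt (fun x => ¬ x ^ p ≡ x [MOD p ^ 2]) (p ^ 2)
      = (Finset.univ.filter (fun y : ZMod (p ^ 2) => ¬ y ^ p = y)).card := by
    rw [← percnt_zmod (p ^ 2) (fun y : ZMod (p ^ 2) => ¬ y ^ p = y)]
    apply percnt_congr
    intro x
    rw [← ZMod.natCast_eq_natCast_iff]
    push_cast
    tauto
  have step2 : (Finset.univ.filter (fun y : ZMod (p ^ 2) => ¬ (c * y) ^ p = c * y)).card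
      = (Finset.univ.filter (fun y : ZMod (p ^ 2) => ¬ y ^ p = y)).card := by
    apply Finset.card_nbij (fun y => c * y)
    · intro y hy
      simp only [Finset.mem_coe, Finset.mem_filter, Finset.mem_univ, true_and] at hy ⊢
      exact hy
    · intro x _ y _ h
      dsimp at h
      exact hc.mul_left_cancel h
    · intro x hx
      simp only [Finset.coe_filter, Set.mem_setOf_eq, Finset.mem_univ, true_and] at hx ⊢
      obtain ⟨u, hu⟩ := hc
      have hux : c * ((↑u⁻¹ : ZMod (p ^ 2)) * x) = x := by
        rw [← mul_assoc, ← hu, ← Units.val_mul, mul_inv_cancel, Units.val_one, one_mul]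
      refine ⟨(↑u⁻¹ : ZMod (p ^ 2)) * x, ?_, ?_⟩
      · simp only [Set.mem_setOf_eq]
        rw [hux]
        exact hx
      · show c * ((↑u⁻¹ : ZMod (p ^ 2)) * x) = x
        exact hux
  rw [step1, step2, ← step3, card_nonsolution p hp]

lemma percnt_pdvd (p : ℕ) (hp : p.Prime) (d : ℕ) (hpd : p ∣ d) :
    percnt (fun j => ¬ (d ^ 2 * j) ^ p ≡ d ^ 2 * j [MOD p ^ 2]) (p ^ 2) = 0 := by
  unfold percnt
  rw [Finset.card_eq_zero, Finset.eq_empty_iff_forall_notMem]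
  intro j hj
  obtain ⟨-, hj2⟩ := percnt_mem.1 hj
  apply hj2
  have h1 : p ^ 2 ∣ d ^ 2 * j := Dvd.dvd.mul_right (pow_dvd_pow_of_dvd hpd 2) j
  have h2 : p ^ 2 ∣ (d ^ 2 * j) ^ p := h1.trans (dvd_pow_self _ hp.pos.ne')
  have e1 : (d ^ 2 * j) ^ p ≡ 0 [MOD p ^ 2] := (Nat.modEq_zero_iff_dvd).2 h2
  have e2 : d ^ 2 * j ≡ 0 [MOD p ^ 2] := (Nat.modEq_zero_iff_dvd).2 h1
  exact e1.trans e2.symm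

lemma percnt_Sd (P : Finset ℕ) (hP : ∀ p ∈ P, p.Prime) (d : ℕ) (hd : 1 ≤ d) :
    percnt (Sd P d) (d ^ 2 * Qb P)
      = if ∀ p ∈ P, ¬ p ∣ d then ∏ p ∈ P, (p ^ 2 - p) else 0 := by
  have hd2 : 0 < d ^ 2 := by positivity
  -- step: reduce to k ↦ d^2 k
  have c1 : percnt (Sd P d) (d ^ 2 * Qb P)
      = percnt (fun k => goodP P (d ^ 2 * k)) (Qb P) := by
    unfold percnt
    refine (Finset.card_nbij (fun k => d ^ 2 * k) ?_ ?_ ?_).symm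
    · intro k hk
      simp only [Finset.mem_coe, Finset.mem_filter, Finset.mem_range] at hk ⊢
      exact ⟨mul_lt_mul_of_pos_left hk.1 hd2, ⟨Dvd.intro k rfl, hk.2⟩⟩
    · intro x _ y _ h
      dsimp at h
      exact Nat.eq_of_mul_eq_mul_left hd2 h
    · intro m hm
      simp only [Finset.coe_filter, Set.mem_setOf_eq, Finset.mem_range] at hm ⊢
      obtain ⟨hmlt, ⟨k, hk⟩, hgood⟩ := hm
      refine ⟨k, ⟨?_, ?_⟩, hk.symm⟩
      · subst hk
        exact Nat.lt_of_mul_lt_mul_left hmlt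
      · rw [← hk]
        exact hgood
  have c2 : percnt (fun k => goodP P (d ^ 2 * k)) (Qb P)
      = ∏ p ∈ P, percnt (fun j => ¬ (d ^ 2 * j) ^ p ≡ d ^ 2 * j [MOD p ^ 2]) (p ^ 2) := by
    have hν : ∀ p ∈ P, 0 < p ^ 2 := fun p hp => pow_pos (hP p hp).pos 2
    have hco : ∀ p ∈ P, ∀ q ∈ P, p ≠ q → Nat.Coprime (p ^ 2) (q ^ 2) := by
      intro p hp q hq hne
      exact Nat.Coprime.pow 2 2 ((Nat.coprime_primes (hP p hp) (hP q hq)).2 hne)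
    have hC : ∀ p ∈ P, ∀ m, (¬ (d ^ 2 * m) ^ p ≡ d ^ 2 * m [MOD p ^ 2])
        ↔ (¬ (d ^ 2 * (m % p ^ 2)) ^ p ≡ d ^ 2 * (m % p ^ 2) [MOD p ^ 2]) := by
      intro p hpP m
      have hm : (d ^ 2 * m) ≡ (d ^ 2 * (m % p ^ 2)) [MOD p ^ 2] :=
        Nat.ModEq.mul_left _ ((Nat.mod_modEq m (p ^ 2)).symm)
      have hpow := hm.pow p
      constructor
      · intro hn hc
        exact hn (hpow.trans (hc.trans hm.symm))
      · intro hn hc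
        exact hn (hpow.symm.trans (hc.trans hm))
    exact crt_prod P (fun p => p ^ 2) (fun p k => ¬ (d ^ 2 * k) ^ p ≡ d ^ 2 * k [MOD p ^ 2])
      hν hco hC
  by_cases hdv : ∀ p ∈ P, ¬ p ∣ d
  · rw [if_pos hdv, c1, c2]
    apply Finset.prod_congr rfl
    intro p hp
    exact percnt_unit_mul p (hP p hp) d (hdv p hp)
  · rw [if_neg hdv, c1, c2]
    push_neg at hdv
    obtain ⟨p, hpP, hpd⟩ := hdv
    exact Finset.prod_eq_zero hpP (percnt_pdvd p (hP p hpP) d hpd)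

lemma cnt_mem {S : ℕ → Prop} {X m : ℕ} :
    m ∈ (Finset.Icc 1 X).filter S ↔ (1 ≤ m ∧ m ≤ X) ∧ S m := by
  rw [Finset.mem_filter, Finset.mem_Icc]

lemma cnt_eq_sum (S : ℕ → Prop) (X : ℕ) :
    (cnt S X : ℤ) = ∑ m ∈ Finset.Icc 1 X, (if S m then (1:ℤ) else 0) := by
  unfold cnt
  rw [Finset.sum_boole]

lemma cnt_mono {S S' : ℕ → Prop} (h : ∀ m, S m → S' m) (X : ℕ) :
    cnt S X ≤ cnt S' X := by
  unfold cnt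
  apply Finset.card_le_card
  intro m hm
  rw [cnt_mem] at hm ⊢
  exact ⟨hm.1, h m hm.2⟩

lemma count_identity (P : Finset ℕ) (X : ℕ) :
    (cnt (fun m => Squarefree m ∧ goodP P m) X : ℤ)
      = ∑ d ∈ Finset.Icc 1 X, (moebius d : ℤ) * (cnt (Sd P d) X : ℤ) := by
  calc (cnt (fun m => Squarefree m ∧ goodP P m) X : ℤ)
      = ∑ m ∈ Finset.Icc 1 X, ∑ d ∈ Finset.Icc 1 X,
          (if goodP P m then (1:ℤ) else 0) * (if d ^ 2 ∣ m then (moebius d : ℤ) else 0) := by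
        rw [cnt_eq_sum]
        apply Finset.sum_congr rfl
        intro m hm
        rw [Finset.mem_Icc] at hm
        rw [← Finset.mul_sum, ← moebius_indicator' m X hm.1 hm.2]
        by_cases h1 : goodP P m
        · rw [if_pos h1, one_mul]
          by_cases h2 : Squarefree m
          · rw [if_pos h2, if_pos ⟨h2, h1⟩]
          · rw [if_neg h2, if_neg (fun hc => h2 hc.1)]
        · rw [if_neg h1, zero_mul, if_neg (fun hc => h1 hc.2)]
    _ = ∑ d ∈ Finset.Icc 1 X, ∑ m ∈ Finset.Icc 1 X,
          (if goodP P m then (1:ℤ) else 0) * (if d ^ 2 ∣ m then (moebius d : ℤ) else 0) :=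
        Finset.sum_comm
    _ = ∑ d ∈ Finset.Icc 1 X, (moebius d : ℤ) * (cnt (Sd P d) X : ℤ) := by
        apply Finset.sum_congr rfl
        intro d _
        calc ∑ m ∈ Finset.Icc 1 X,
              (if goodP P m then (1:ℤ) else 0) * (if d ^ 2 ∣ m then (moebius d : ℤ) else 0)
            = ∑ m ∈ Finset.Icc 1 X, (moebius d : ℤ) * (if Sd P d m then (1:ℤ) else 0) := by
              apply Finset.sum_congr rfl
              intro m _
              by_cases h1 : goodP P m
              · by_cases h2 : d ^ 2 ∣ m
                · rw [if_pos h1, if_pos h2, if_pos (show Sd P d m from ⟨h2, h1⟩), one_mul, mul_one]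
                · rw [if_pos h1, if_neg h2, if_neg (fun hc : Sd P d m => h2 hc.1), one_mul, mul_zero]
              · rw [if_neg h1, zero_mul, if_neg (fun hc : Sd P d m => h1 hc.2), mul_zero]
          _ = (moebius d : ℤ) * (cnt (Sd P d) X : ℤ) := by
              rw [← Finset.mul_sum, ← cnt_eq_sum]

lemma cnt_dvd_eq (k X : ℕ) (hk : 1 ≤ k) : cnt (fun m => k ∣ m) X = X / k := by
  unfold cnt
  have h1 : Finset.Icc 1 X = Finset.Ioc 0 X := by
    ext m; simp [Finset.mem_Icc, Finset.mem_Ioc]; omega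
  rw [h1]
  have h2 := Nat.Ioc_filter_dvd_card_eq_div X k
  convert h2 using 2
  exact Finset.filter_congr_decidable _ _ _

lemma cnt_Sd_le (P : Finset ℕ) (d X : ℕ) (hd : 1 ≤ d) :
    cnt (Sd P d) X ≤ X / d ^ 2 := by
  have h1 : cnt (Sd P d) X ≤ cnt (fun m => d ^ 2 ∣ m) X :=
    cnt_mono (fun m hm => hm.1) X
  rw [cnt_dvd_eq (d ^ 2) X (Nat.one_le_pow _ _ (by omega))] at h1
  exact h1

lemma sum_Icc_inv_sq (D : ℕ) (hD : 1 ≤ D) (X : ℕ) :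
    ∑ d ∈ Finset.Icc (D + 1) X, (1:ℝ) / (d:ℝ) ^ 2 ≤ 1 / D := by
  have hD' : (0:ℝ) < D := by exact_mod_cast hD
  rcases le_or_gt X D with hXD | hXD
  · rw [Finset.Icc_eq_empty (by omega), Finset.sum_empty]
    positivity
  · have key : ∀ Y, D ≤ Y → ∑ d ∈ Finset.Icc (D + 1) Y, (1:ℝ) / (d:ℝ) ^ 2 ≤ 1 / D - 1 / Y := by
      intro Y hY
      induction Y, hY using Nat.le_induction with
      | base =>
        rw [Finset.Icc_eq_empty (by omega)]
        simp
      | succ Y hY ih =>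
        rw [Finset.sum_Icc_succ_top (by omega)]
        have hY' : (0:ℝ) < Y := by
          have : 1 ≤ Y := le_trans hD hY
          exact_mod_cast this
        have hY1 : (0:ℝ) < (Y:ℝ) + 1 := by positivity
        have hstep : (1:ℝ) / ((Y:ℝ) + 1) ^ 2 ≤ 1 / Y - 1 / ((Y:ℝ) + 1) := by
          rw [div_sub_div _ _ hY'.ne' hY1.ne']
          have he : (1:ℝ) * ((Y:ℝ)+1) - (Y:ℝ) * 1 = 1 := by ring
          rw [he]
          apply one_div_le_one_div_of_le (by positivity)
          nlinarith
        have hcast : ((Y + 1 : ℕ) : ℝ) = (Y:ℝ) + 1 := by push_cast; ring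
        rw [hcast]
        calc ∑ d ∈ Finset.Icc (D + 1) Y, (1:ℝ)/(d:ℝ)^2 + 1/((Y:ℝ)+1)^2
            ≤ (1/D - 1/Y) + (1/Y - 1/((Y:ℝ)+1)) := by
              apply add_le_add ih hstep
          _ = 1/D - 1/((Y:ℝ)+1) := by ring
    have h2 := key X (by omega)
    have hX' : (0:ℝ) < X := by
      have : 1 ≤ X := by omega
      exact_mod_cast this
    have : (0:ℝ) ≤ 1 / X := by positivity
    linarith

noncomputable def sfun (P : Finset ℕ) (d : ℕ) : ℝ :=
  (∏ p ∈ P, (1 - 1 / (p : ℝ))) * gfun P d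

noncomputable def rho (P : Finset ℕ) (d : ℕ) : ℝ :=
  (percnt (Sd P d) (d ^ 2 * Qb P) : ℝ) / (d ^ 2 * Qb P)

lemma fd_tendsto (P : Finset ℕ) (hP : ∀ p ∈ P, p.Prime) (d : ℕ) (hd : 1 ≤ d) :
    Tendsto (fun X : ℕ => (cnt (Sd P d) X : ℝ) / X) atTop (nhds (rho P d)) := by
  have hq : 0 < d ^ 2 * Qb P :=
    Nat.mul_pos (pow_pos (by omega) 2) (Qb_pos P hP)
  have h := periodic_density (Sd P d) (d ^ 2 * Qb P) hq (Sd_periodic P hP d)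
  unfold rho
  convert h using 2
  push_cast
  ring

lemma seval (P : Finset ℕ) (hP : ∀ p ∈ P, p.Prime) (d : ℕ) (hd : 1 ≤ d) :
    (moebius d : ℝ) * rho P d = sfun P d := by
  unfold rho sfun gfun
  rw [percnt_Sd P hP d hd]
  have hd0 : ((d:ℝ)) ≠ 0 := by positivity
  have hprod_pos : ∀ p ∈ P, ((p:ℝ)) ≠ 0 := fun p hp => by
    have := (hP p hp).pos; positivity
  by_cases hdv : ∀ p ∈ P, ¬ p ∣ d
  · rw [if_pos hdv, if_pos hdv]
    have hc1 : ((∏ p ∈ P, (p ^ 2 - p) : ℕ) : ℝ) = ∏ p ∈ P, ((p:ℝ) ^ 2 - p) := by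
      push_cast [Nat.cast_prod]
      apply Finset.prod_congr rfl
      intro p hp
      have h2 : p ≤ p ^ 2 := Nat.le_self_pow (by norm_num) p
      push_cast [Nat.cast_sub h2]
      ring
    have hc2 : ((Qb P : ℕ) : ℝ) = ∏ p ∈ P, (p:ℝ)^2 := by
      unfold Qb
      push_cast
      ring
    rw [hc1, hc2]
    have hfact : ∏ p ∈ P, ((p:ℝ)^2 - p) = (∏ p ∈ P, (1 - 1/(p:ℝ))) * ∏ p ∈ P, (p:ℝ)^2 := by
      rw [← Finset.prod_mul_distrib]
      apply Finset.prod_congr rfl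
      intro p hp
      have := hprod_pos p hp
      field_simp
    rw [hfact]
    have hQne : (∏ p ∈ P, (p:ℝ)^2) ≠ 0 :=
      Finset.prod_ne_zero_iff.2 (fun p hp => pow_ne_zero 2 (hprod_pos p hp))
    field_simp
  · rw [if_neg hdv, if_neg hdv]
    simp

lemma sfun_zero (P : Finset ℕ) : sfun P 0 = 0 := by
  unfold sfun gfun
  split_ifs with h
  · simp
  · simp

lemma gfun_abs_le (P : Finset ℕ) (d : ℕ) : |gfun P d| ≤ 1 / (d:ℝ)^2 := by
  unfold gfun
  rcases Nat.eq_zero_or_pos d with rfl | hd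
  · split_ifs <;> simp
  split_ifs with h
  · rw [abs_div, abs_of_nonneg (by positivity : (0:ℝ) ≤ (d:ℝ)^2)]
    gcongr
    have h1 : |moebius d| ≤ 1 := abs_moebius_le_one
    exact_mod_cast h1
  · rw [abs_zero]; positivity

lemma sfun_abs_le (P : Finset ℕ) (hP : ∀ p ∈ P, p.Prime) (d : ℕ) :
    |sfun P d| ≤ 1 / (d:ℝ)^2 := by
  unfold sfun
  rw [abs_mul]
  have hfac : ∀ p ∈ P, (0:ℝ) ≤ 1 - 1/(p:ℝ) ∧ (1 - 1/(p:ℝ)) ≤ 1 := by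
    intro p hp
    have h2 : (2:ℝ) ≤ p := by exact_mod_cast (hP p hp).two_le
    have h3 : (0:ℝ) ≤ 1/(p:ℝ) := by positivity
    have h4 : 1/(p:ℝ) ≤ 1 := by rw [div_le_one (by linarith)]; linarith
    constructor <;> linarith
  have h1 : |∏ p ∈ P, (1 - 1/(p:ℝ))| ≤ 1 := by
    rw [abs_of_nonneg (Finset.prod_nonneg (fun p hp => (hfac p hp).1))]
    exact Finset.prod_le_one (fun p hp => (hfac p hp).1) (fun p hp => (hfac p hp).2)
  calc |∏ p ∈ P, (1 - 1/(p:ℝ))| * |gfun P d| ≤ 1 * |gfun P d| := by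
        apply mul_le_mul_of_nonneg_right h1 (abs_nonneg _)
    _ = |gfun P d| := one_mul _
    _ ≤ 1/(d:ℝ)^2 := gfun_abs_le P d

lemma summable_invsq : Summable (fun d : ℕ => 1 / (d:ℝ)^2) :=
  (Real.summable_one_div_nat_pow).2 one_lt_two

lemma summable_gfun (P : Finset ℕ) : Summable (gfun P) := by
  apply Summable.of_norm_bounded summable_invsq
  intro d
  rw [Real.norm_eq_abs]
  exact gfun_abs_le P d

lemma summable_sfun (P : Finset ℕ) : Summable (sfun P) := by
  unfold sfun
  exact (summable_gfun P).mul_left _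

lemma tail_invsq_le (D : ℕ) (hD : 1 ≤ D) :
    ∑' k : ℕ, (1:ℝ) / ((k + (D+1) : ℕ):ℝ)^2 ≤ 1 / D := by
  have hsinv : Summable (fun k : ℕ => (1:ℝ)/((k + (D+1):ℕ):ℝ)^2) :=
    (summable_nat_add_iff (f := fun d : ℕ => 1/(d:ℝ)^2) (D+1)).2 summable_invsq
  apply Summable.tsum_le_of_sum_le hsinv
  intro F
  obtain ⟨K, hK⟩ := F.exists_nat_subset_range
  calc ∑ k ∈ F, (1:ℝ)/((k + (D+1):ℕ):ℝ)^2
      ≤ ∑ k ∈ Finset.range K, (1:ℝ)/((k + (D+1):ℕ):ℝ)^2 := by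
        apply Finset.sum_le_sum_of_subset_of_nonneg hK
        intro i _ _
        positivity
    _ = ∑ d ∈ Finset.Icc (D+1) (D+K), (1:ℝ)/(d:ℝ)^2 := by
        apply Finset.sum_nbij (fun k => k + (D+1))
        · intro k hk
          simp only [Finset.mem_range] at hk
          simp only [Finset.mem_Icc]
          omega
        · intro a _ b _ h
          dsimp at h
          omega
        · intro d hd
          simp only [Finset.mem_coe, Finset.mem_Icc] at hd
          simp only [Set.mem_image, Finset.mem_coe, Finset.mem_range]
          exact ⟨d - (D+1), by omega, by omega⟩
        · intro k _
          rfl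
    _ ≤ 1 / D := sum_Icc_inv_sq D hD (D+K)

lemma sfun_tail (P : Finset ℕ) (hP : ∀ p ∈ P, p.Prime) (D : ℕ) (hD : 1 ≤ D) :
    |(∑' d, sfun P d) - ∑ d ∈ Finset.Icc 1 D, sfun P d| ≤ 1 / D := by
  have hsum := summable_sfun P
  have hrange : ∑ d ∈ Finset.range (D+1), sfun P d = ∑ d ∈ Finset.Icc 1 D, sfun P d := by
    have h1 : Finset.range (D+1) = insert 0 (Finset.Icc 1 D) := by
      ext m
      simp only [Finset.mem_range, Finset.mem_insert, Finset.mem_Icc]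
      omega
    rw [h1, Finset.sum_insert (by simp), sfun_zero P, zero_add]
  have hkey := Summable.sum_add_tsum_nat_add (D+1) hsum
  have heq : (∑' d, sfun P d) - ∑ d ∈ Finset.Icc 1 D, sfun P d
      = ∑' k : ℕ, sfun P (k + (D+1)) := by
    rw [← hrange]
    linarith [hkey]
  rw [heq]
  have habs : ∀ k : ℕ, |sfun P (k + (D+1))| ≤ 1/((k + (D+1):ℕ):ℝ)^2 :=
    fun k => sfun_abs_le P hP _
  have hshift : Summable (fun k : ℕ => sfun P (k + (D+1))) :=
    (summable_nat_add_iff (D+1)).2 hsum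
  calc |∑' k : ℕ, sfun P (k + (D+1))|
      ≤ ∑' k : ℕ, |sfun P (k + (D+1))| := by
        have := norm_tsum_le_tsum_norm (f := fun k : ℕ => sfun P (k + (D+1)))
          (by simpa [Real.norm_eq_abs] using hshift.abs)
        simpa [Real.norm_eq_abs] using this
    _ ≤ ∑' k : ℕ, (1:ℝ)/((k + (D+1):ℕ):ℝ)^2 := by
        apply Summable.tsum_le_tsum habs hshift.abs
        exact (summable_nat_add_iff (f := fun d : ℕ => 1/(d:ℝ)^2) (D+1)).2 summable_invsq
    _ ≤ 1 / D := tail_invsq_le D hD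

lemma cnt_natcard (S : ℕ → Prop) (X : ℕ) :
    Nat.card {m : ℕ | 1 ≤ m ∧ m ≤ X ∧ S m} = cnt S X := by
  have hseteq : {m : ℕ | 1 ≤ m ∧ m ≤ X ∧ S m} = ↑((Finset.Icc 1 X).filter S) := by
    ext m
    rw [Finset.mem_coe, cnt_mem]
    simp only [Set.mem_setOf_eq]
    tauto
  rw [hseteq, Nat.card_coe_set_eq, Set.ncard_coe_finset]
  rfl
lemma Sval (P : Finset ℕ) (hP : ∀ p ∈ P, p.Prime) :
    ∑' d, sfun P d = (6 / Real.pi ^ 2) * ∏ p ∈ P, (p:ℝ) / ((p:ℝ) + 1) := by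
  have hA : ∀ p ∈ P, (0:ℝ) < 1 - 1/(p:ℝ)^2 := by
    intro p hp
    have h2 : (2:ℝ) ≤ p := by exact_mod_cast (hP p hp).two_le
    have h3 : 1/(p:ℝ)^2 < 1 := by
      rw [div_lt_one (by positivity)]
      nlinarith
    linarith
  have hAne : (∏ p ∈ P, (1 - 1/(p:ℝ)^2)) ≠ 0 := (Finset.prod_pos hA).ne'
  have htc := tsum_coprime P hP
  have hgsum : ∑' d, gfun P d = (6/Real.pi^2) / (∏ p ∈ P, (1 - 1/(p:ℝ)^2)) := by
    rw [eq_div_iff hAne]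
    linear_combination htc
  have hts : ∑' d, sfun P d = (∏ p ∈ P, (1 - 1/(p:ℝ))) * ∑' d, gfun P d := by
    unfold sfun
    rw [tsum_mul_left]
  rw [hts, hgsum]
  have hfac : ∀ p ∈ P, (1 - 1/(p:ℝ)) = (p:ℝ)/((p:ℝ)+1) * (1 - 1/(p:ℝ)^2) := by
    intro p hp
    have h2 : (2:ℝ) ≤ p := by exact_mod_cast (hP p hp).two_le
    have hp0 : ((p:ℝ)) ≠ 0 := by linarith
    have hp1 : ((p:ℝ)) + 1 ≠ 0 := by linarith
    field_simp
    ring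
  have hcprod : (∏ p ∈ P, (1 - 1/(p:ℝ)))
      = (∏ p ∈ P, (p:ℝ)/((p:ℝ)+1)) * (∏ p ∈ P, (1 - 1/(p:ℝ)^2)) := by
    rw [← Finset.prod_mul_distrib]
    exact Finset.prod_congr rfl hfac
  rw [hcprod]
  field_simp

theorem squarefree_good_for_all_primes_dividing_density
    (n : ℕ) (hn : 2 ≤ n) :
    natDensity {m : ℕ | Squarefree m ∧ ∀ p ∈ n.primeFactors, ¬ m ^ p ≡ m [MOD p ^ 2]}
      ((6 / Real.pi ^ 2) * ∏ p ∈ n.primeFactors, (p : ℝ) / ((p : ℝ) + 1)) := by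
  have hP : ∀ p ∈ n.primeFactors, p.Prime := fun p hp => Nat.prime_of_mem_primeFactors hp
  set P := n.primeFactors with hPdef
  have hcard : ∀ X : ℕ,
      (Nat.card {m : ℕ | 1 ≤ m ∧ m ≤ X ∧ m ∈ {m : ℕ | Squarefree m ∧ ∀ p ∈ n.primeFactors, ¬ m ^ p ≡ m [MOD p ^ 2]}} : ℝ)
        = (cnt (fun m => Squarefree m ∧ goodP P m) X : ℝ) := by
    intro X
    have h := cnt_natcard (fun m => Squarefree m ∧ goodP P m) X
    exact_mod_cast h
  unfold natDensity
  have hval : (6 / Real.pi ^ 2) * ∏ p ∈ n.primeFactors, (p : ℝ) / ((p : ℝ) + 1)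
      = ∑' d, sfun P d := (Sval P hP).symm
  rw [hval]
  have hsum := summable_sfun P
  have hmain : Tendsto (fun X : ℕ => (cnt (fun m => Squarefree m ∧ goodP P m) X : ℝ) / X)
      atTop (nhds (∑' d, sfun P d)) := by
    rw [Metric.tendsto_atTop]
    intro ε hε
    obtain ⟨D0, hD0⟩ := exists_nat_one_div_lt (show (0:ℝ) < ε/4 by linarith)
    set D := D0 + 1 with hDdef
    have hD1 : 1 ≤ D := by omega
    have hDe : (1:ℝ)/D < ε/4 := by
      have hc : ((D:ℕ) : ℝ) = (D0:ℝ) + 1 := by rw [hDdef]; push_cast; ring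
      rw [hc]
      exact hD0
    have hpart : Tendsto (fun X : ℕ => ∑ d ∈ Finset.Icc 1 D, (moebius d : ℝ) * ((cnt (Sd P d) X : ℝ)/X))
        atTop (nhds (∑ d ∈ Finset.Icc 1 D, (moebius d : ℝ) * rho P d)) := by
      apply tendsto_finset_sum
      intro d hd
      rw [Finset.mem_Icc] at hd
      exact (fd_tendsto P hP d hd.1).const_mul _
    rw [Metric.tendsto_atTop] at hpart
    obtain ⟨N1, hN1⟩ := hpart (ε/4) (by linarith)
    refine ⟨max N1 (max D 1), ?_⟩
    intro X hX
    have hXD : D ≤ X := le_trans (le_trans (le_max_left D 1) (le_max_right N1 _)) hX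
    have hX1 : 1 ≤ X := le_trans (le_trans (le_max_right D 1) (le_max_right N1 _)) hX
    have hXpos : (0:ℝ) < X := by exact_mod_cast hX1
    have hid : (cnt (fun m => Squarefree m ∧ goodP P m) X : ℝ)
        = ∑ d ∈ Finset.Icc 1 X, (moebius d : ℝ) * (cnt (Sd P d) X : ℝ) := by
      have h := count_identity P X
      have h2 := congrArg (fun z : ℤ => (z : ℝ)) h
      push_cast at h2
      exact h2
    have hsplit : Finset.Icc 1 X = Finset.Icc 1 D ∪ Finset.Icc (D+1) X := by
      ext m
      simp only [Finset.mem_union, Finset.mem_Icc]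
      omega
    have hdisj : Disjoint (Finset.Icc 1 D) (Finset.Icc (D+1) X) := by
      rw [Finset.disjoint_left]
      intro a ha hb
      rw [Finset.mem_Icc] at ha hb
      omega
    have hterm : ∀ d, D + 1 ≤ d → |(moebius d : ℝ) * ((cnt (Sd P d) X : ℝ)/X)| ≤ 1/(d:ℝ)^2 := by
      intro d hd
      have hd2 : (0:ℝ) < (d:ℝ)^2 := by
        have : (1:ℝ) ≤ d := by exact_mod_cast (by omega : 1 ≤ d)
        positivity
      rw [abs_mul]
      have h1 : |(moebius d : ℝ)| ≤ 1 := by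
        have := abs_moebius_le_one (n := d)
        exact_mod_cast this
      have h3 : (cnt (Sd P d) X : ℝ) ≤ (X:ℝ)/(d:ℝ)^2 := by
        have h4 := cnt_Sd_le P d X (by omega)
        calc (cnt (Sd P d) X : ℝ) ≤ ((X / d^2 : ℕ) : ℝ) := by exact_mod_cast h4
          _ ≤ (X:ℝ)/((d:ℝ)^2) := by
              have h5 : ((X / d^2 : ℕ) : ℝ) ≤ ((X : ℕ):ℝ) / ((d^2 : ℕ):ℝ) := Nat.cast_div_le
              push_cast at h5
              exact h5
      have h2 : |(cnt (Sd P d) X : ℝ)/X| ≤ 1/(d:ℝ)^2 := by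
        rw [abs_of_nonneg (by positivity)]
        have h6 : ((X:ℝ)/(d:ℝ)^2)/X = 1/(d:ℝ)^2 := by
          field_simp
        calc (cnt (Sd P d) X : ℝ)/X ≤ ((X:ℝ)/(d:ℝ)^2)/X := by gcongr
          _ = 1/(d:ℝ)^2 := h6
      calc |(moebius d : ℝ)| * |(cnt (Sd P d) X : ℝ)/X| ≤ 1 * (1/(d:ℝ)^2) :=
            mul_le_mul h1 h2 (abs_nonneg _) zero_le_one
        _ = 1/(d:ℝ)^2 := one_mul _
    have htail : |∑ d ∈ Finset.Icc (D+1) X, (moebius d : ℝ) * ((cnt (Sd P d) X : ℝ)/X)| ≤ 1/D := by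
      calc |∑ d ∈ Finset.Icc (D+1) X, (moebius d : ℝ) * ((cnt (Sd P d) X : ℝ)/X)|
          ≤ ∑ d ∈ Finset.Icc (D+1) X, |(moebius d : ℝ) * ((cnt (Sd P d) X : ℝ)/X)| :=
            Finset.abs_sum_le_sum_abs _ _
        _ ≤ ∑ d ∈ Finset.Icc (D+1) X, 1/(d:ℝ)^2 := by
            apply Finset.sum_le_sum
            intro d hd
            rw [Finset.mem_Icc] at hd
            exact hterm d hd.1
        _ ≤ 1/D := sum_Icc_inv_sq D hD1 X
    have htsum := sfun_tail P hP D hD1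
    have hpd := hN1 X (le_trans (le_max_left _ _) hX)
    rw [Real.dist_eq] at hpd
    rw [Real.dist_eq]
    have hTX : (cnt (fun m => Squarefree m ∧ goodP P m) X : ℝ)/X
        = (∑ d ∈ Finset.Icc 1 D, (moebius d : ℝ) * ((cnt (Sd P d) X : ℝ)/X))
          + ∑ d ∈ Finset.Icc (D+1) X, (moebius d : ℝ) * ((cnt (Sd P d) X : ℝ)/X) := by
      rw [hid, hsplit, Finset.sum_union hdisj, add_div, Finset.sum_div, Finset.sum_div]
      congr 1
      · apply Finset.sum_congr rfl
        intro d _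
        rw [mul_div_assoc]
      · apply Finset.sum_congr rfl
        intro d _
        rw [mul_div_assoc]
    have hseval : ∑ d ∈ Finset.Icc 1 D, (moebius d : ℝ) * rho P d
        = ∑ d ∈ Finset.Icc 1 D, sfun P d := by
      apply Finset.sum_congr rfl
      intro d hd
      rw [Finset.mem_Icc] at hd
      exact seval P hP d hd.1
    have hexp : (cnt (fun m => Squarefree m ∧ goodP P m) X : ℝ)/X - ∑' d, sfun P d
        = ((∑ d ∈ Finset.Icc 1 D, (moebius d : ℝ) * ((cnt (Sd P d) X : ℝ)/X))
            - ∑ d ∈ Finset.Icc 1 D, (moebius d : ℝ) * rho P d)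
          + (∑ d ∈ Finset.Icc (D+1) X, (moebius d : ℝ) * ((cnt (Sd P d) X : ℝ)/X))
          + ((∑ d ∈ Finset.Icc 1 D, sfun P d) - ∑' d, sfun P d) := by
      rw [hTX, ← hseval]
      ring
    rw [hexp]
    have habs2 : |(∑ d ∈ Finset.Icc 1 D, sfun P d) - ∑' d, sfun P d| ≤ 1/D := by
      rw [abs_sub_comm]
      exact htsum
    calc |_ + _ + _|
        ≤ |(∑ d ∈ Finset.Icc 1 D, (moebius d : ℝ) * ((cnt (Sd P d) X : ℝ)/X))
            - ∑ d ∈ Finset.Icc 1 D, (moebius d : ℝ) * rho P d|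
          + |∑ d ∈ Finset.Icc (D+1) X, (moebius d : ℝ) * ((cnt (Sd P d) X : ℝ)/X)|
          + |(∑ d ∈ Finset.Icc 1 D, sfun P d) - ∑' d, sfun P d| := by
            apply (abs_add_le _ _).trans
            apply add_le_add_left
            exact abs_add_le _ _
      _ < ε := by
          have := hpd
          linarith
  apply hmain.congr
  intro X
  rw [← hcard X]
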